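/- The work deficit density of an N-partite state satisfies L_l ≤ δ ≤ U_l for every segment length l dividing N. -/

import Mathlib

noncomputable section
open scoped BigOperators ComplexOrder

/-- Shannon entropy (natural logarithm), with the convention `0 * log 0 = 0`. -/
def shannon {α : Type*} [Fintype α] (p : α → ℝ) : ℝ := -∑ y, p y * Real.log (p y)

/-- `B` lists the members of an orthonormal basis of `ℂ^d` (the rows `B a` are the basis
vectors). -/
def ONB {d : ℕ} (B : Fin d → Fin d → ℂ) : Prop :=
  ∀ a b, (∑ i, (starRingEnd ℂ) (B a i) * B b i) = if a = b then 1 else 0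

/-- Von Neumann entropy (natural logarithm) of a Hermitian matrix, defined through its
eigenvalues; junk value `0` on non-Hermitian input. -/
def vN {n : Type*} [Fintype n] [DecidableEq n] (ρ : Matrix n n ℂ) : ℝ :=
  if h : ρ.IsHermitian then -∑ i, h.eigenvalues i * Real.log (h.eigenvalues i) else 0

/-- `ρ` is a density matrix. -/
def IsDensity {n : Type*} [Fintype n] [DecidableEq n] (ρ : Matrix n n ℂ) : Prop :=
  ρ.PosSemidef ∧ ρ.trace = 1

/-- Born-rule joint outcome distribution of the non-adaptive local rank-one projective
measurement with per-party orthonormal bases `B n`, applied to the `N`-party state `ρ`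
(each party being `d`-dimensional): `P(Y) = Tr[(Π_{y₁} ⊗ ⋯ ⊗ Π_{y_N}) ρ]`. -/
def locProb {N d : ℕ} (ρ : Matrix (Fin N → Fin d) (Fin N → Fin d) ℂ)
    (B : Fin N → Fin d → Fin d → ℂ) (y : Fin N → Fin d) : ℝ :=
  (∑ s, ∑ t, (∏ n, B n (y n) (s n) * (starRingEnd ℂ) (B n (y n) (t n))) * ρ t s).re

/-- The multipartite (zero-way) work deficit
`Δ(ρ) = min_{Λ ∈ M_N} H_Λ(Y_N) − S(ρ)`. -/
def deficit {N d : ℕ} (ρ : Matrix (Fin N → Fin d) (Fin N → Fin d) ℂ) : ℝ :=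
  sInf {h : ℝ | ∃ B : Fin N → Fin d → Fin d → ℂ,
    (∀ n, ONB (B n)) ∧ h = shannon (locProb ρ B)} - vN ρ

/-- The `l`-site segment of parties starting at position `m*l`
(parties `n` with `m*l ≤ n < m*l + l`). -/
def seg (N m l : ℕ) : Finset (Fin N) :=
  Finset.univ.filter (fun i => m * l ≤ i.val ∧ i.val < m * l + l)

/-- Born-rule probability of the outcome `y` when the parties in `A` are measured in the local
orthonormal bases `B n` (and nothing is done to the other parties):
`p(y) = Tr[(⊗_{n ∈ A} Π_{y_n} ⊗ 1) ρ]`.  Only the values of `y` on `A` matter. -/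
def segProb {N d : ℕ} (ρ : Matrix (Fin N → Fin d) (Fin N → Fin d) ℂ)
    (A : Finset (Fin N)) (B : Fin N → Fin d → Fin d → ℂ) (y : Fin N → Fin d) : ℝ :=
  (∑ s, ∑ t, (∏ n, if n ∈ A then B n (y n) (s n) * (starRingEnd ℂ) (B n (y n) (t n))
      else if s n = t n then (1 : ℂ) else 0) * ρ t s).re

/-- The outcome distribution of measuring the parties in `A`, recorded as a distribution over
all outcome functions by pinning the outcomes outside `A` to `0`. -/
def segDist {N d : ℕ} [NeZero d] (ρ : Matrix (Fin N → Fin d) (Fin N → Fin d) ℂ)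
    (A : Finset (Fin N)) (B : Fin N → Fin d → Fin d → ℂ) (y : Fin N → Fin d) : ℝ :=
  if ∀ n, n ∉ A → y n = 0 then segProb ρ A B y else 0

/-- The upper bound `U_l = (1/N){∑_{n ∈ I_l} min_{Λ ∈ M_{n:l}} H_Λ(Y_{n:l}) − S(ρ)}` for the
work deficit density. -/
def Ubound {N d : ℕ} [NeZero d] (ρ : Matrix (Fin N → Fin d) (Fin N → Fin d) ℂ)
    (l : ℕ) : ℝ :=
  (1 / (N : ℝ)) * ((∑ m ∈ Finset.range (N / l),
    sInf {h : ℝ | ∃ B : Fin N → Fin d → Fin d → ℂ,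
      (∀ n, ONB (B n)) ∧ h = shannon (segDist ρ (seg N m l) B)}) - vN ρ)

/-- `E` is a POVM: positive semidefinite operators summing to the identity. -/
def IsPOVM {ι α : Type*} [Fintype ι] [Fintype α] [DecidableEq α]
    (E : ι → Matrix α α ℂ) : Prop :=
  (∀ z, (E z).PosSemidef) ∧ (∑ z, E z) = 1

/-- Joint Born-rule probability of outcomes `(z, y)` for a protocol in `N_{n:l}`: an arbitrary
POVM `E` (with outcome `z`) on the prefix parties `{a_i : i < m*l}` together with local
rank-one projective measurements `B` on the segment parties `{a_i : m*l ≤ i < m*l + l}`. -/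
def prefSegProb {N d : ℕ} (ρ : Matrix (Fin N → Fin d) (Fin N → Fin d) ℂ) (m l : ℕ)
    {Z : Type} [Fintype Z]
    (E : Z → Matrix (Fin (min (m * l) N) → Fin d) (Fin (min (m * l) N) → Fin d) ℂ)
    (B : Fin N → Fin d → Fin d → ℂ) (z : Z) (y : Fin N → Fin d) : ℝ :=
  (∑ s, ∑ t, E z (fun i => s (Fin.castLE (Nat.min_le_right _ _) i))
      (fun i => t (Fin.castLE (Nat.min_le_right _ _) i)) *
      (∏ n, if n ∈ seg N m l then B n (y n) (s n) * (starRingEnd ℂ) (B n (y n) (t n))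
        else if n.val < m * l then (1 : ℂ) else if s n = t n then (1 : ℂ) else 0) * ρ t s).re

/-- Joint outcome distribution of a protocol in `N_{n:l}`, with segment-external projective
outcomes pinned to `0`. -/
def prefSegDist {N d : ℕ} [NeZero d] (ρ : Matrix (Fin N → Fin d) (Fin N → Fin d) ℂ)
    (m l : ℕ) {Z : Type} [Fintype Z]
    (E : Z → Matrix (Fin (min (m * l) N) → Fin d) (Fin (min (m * l) N) → Fin d) ℂ)
    (B : Fin N → Fin d → Fin d → ℂ) (zy : Z × (Fin N → Fin d)) : ℝ :=
  if ∀ n, n ∉ seg N m l → zy.2 n = 0 then prefSegProb ρ m l E B zy.1 zy.2 else 0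

/-- Conditional Shannon entropy `H(Y|Z) = H(Z,Y) − H(Z)` of a joint distribution. -/
def condShannon {Z Y' : Type*} [Fintype Z] [Fintype Y'] (p : Z × Y' → ℝ) : ℝ :=
  shannon p - shannon (fun z => ∑ y, p (z, y))

/-- The lower bound `L_l = (1/N){∑_{n ∈ I_l} min_{Λ ∈ N_{n:l}} H_Λ(Y_{n:l}|Z_n) − S(ρ)}` for
the work deficit density. -/
def Lbound {N d : ℕ} [NeZero d] (ρ : Matrix (Fin N → Fin d) (Fin N → Fin d) ℂ)
    (l : ℕ) : ℝ :=
  (1 / (N : ℝ)) * ((∑ m ∈ Finset.range (N / l),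
    sInf {h : ℝ | ∃ (Z : Type) (_ : Fintype Z)
      (E : Z → Matrix (Fin (min (m * l) N) → Fin d) (Fin (min (m * l) N) → Fin d) ℂ)
      (B : Fin N → Fin d → Fin d → ℂ),
      IsPOVM E ∧ (∀ n, ONB (B n)) ∧
      h = condShannon (prefSegDist ρ m l E B)}) - vN ρ)

section Entropy

lemma neg_mul_log_nonneg {x : ℝ} (h0 : 0 ≤ x) (h1 : x ≤ 1) : 0 ≤ -(x * Real.log x) := by
  have h := mul_nonneg h0 (neg_nonneg.2 (Real.log_nonpos h0 h1))
  nlinarith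

lemma shannon_nonneg {α : Type*} [Fintype α] {p : α → ℝ} (h0 : ∀ y, 0 ≤ p y)
    (h1 : ∀ y, p y ≤ 1) : 0 ≤ shannon p := by
  unfold shannon
  rw [← Finset.sum_neg_distrib]
  exact Finset.sum_nonneg fun y _ => neg_mul_log_nonneg (h0 y) (h1 y)

lemma gibbs {α : Type*} [Fintype α] {p r : α → ℝ} (hp0 : ∀ y, 0 ≤ p y)
    (hps : ∑ y, p y = 1) (hr0 : ∀ y, 0 ≤ r y) (hrs : ∑ y, r y ≤ 1)
    (hdom : ∀ y, r y = 0 → p y = 0) :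
    shannon p ≤ -∑ y, p y * Real.log (r y) := by
  unfold shannon
  rw [neg_le_neg_iff]
  have key : ∀ y, p y * Real.log (r y) - p y * Real.log (p y) ≤ r y - p y := by
    intro y
    rcases eq_or_lt_of_le (hp0 y) with h | h
    · simp only [← h, zero_mul, sub_zero, sub_self]
      exact hr0 y
    · have hr : 0 < r y := by
        rcases eq_or_lt_of_le (hr0 y) with h' | h'
        · exact absurd (hdom y h'.symm) (ne_of_gt h)
        · exact h'
      have h1 : Real.log (r y) - Real.log (p y) ≤ r y / p y - 1 := by
        rw [← Real.log_div (ne_of_gt hr) (ne_of_gt h)]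
        exact Real.log_le_sub_one_of_pos (div_pos hr h)
      have h2 := mul_le_mul_of_nonneg_left h1 (le_of_lt h)
      have h3 : p y * (r y / p y - 1) = r y - p y := by field_simp
      nlinarith
  have hsum := Finset.sum_le_sum (fun y (_ : y ∈ Finset.univ) => key y)
  rw [Finset.sum_sub_distrib, Finset.sum_sub_distrib, hps] at hsum
  linarith

lemma shannon_marginal_le {Z Y : Type*} [Fintype Z] [Fintype Y] {p : Z × Y → ℝ}
    (h0 : ∀ x, 0 ≤ p x) :
    shannon (fun z => ∑ y, p (z, y)) ≤ shannon p := by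
  unfold shannon
  rw [neg_le_neg_iff, Fintype.sum_prod_type]
  refine Finset.sum_le_sum fun z _ => ?_
  have hq0 : (0:ℝ) ≤ ∑ y, p (z, y) := Finset.sum_nonneg fun y _ => h0 _
  have step : ∀ y : Y, p (z, y) * Real.log (p (z, y))
      ≤ p (z, y) * Real.log (∑ y', p (z, y')) := by
    intro y
    rcases eq_or_lt_of_le (h0 (z, y)) with h | h
    · rw [← h, zero_mul, zero_mul]
    · refine mul_le_mul_of_nonneg_left ?_ (le_of_lt h)
      exact Real.log_le_log h
        (Finset.single_le_sum (fun y' (_ : y' ∈ Finset.univ) => h0 (z, y')) (Finset.mem_univ y))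
  calc ∑ y, p (z, y) * Real.log (p (z, y))
      ≤ ∑ y, p (z, y) * Real.log (∑ y', p (z, y')) := Finset.sum_le_sum fun y _ => step y
    _ = (∑ y, p (z, y)) * Real.log (∑ y', p (z, y')) := by rw [Finset.sum_mul]

lemma shannon_subadd {Z Y : Type*} [Fintype Z] [Fintype Y] {p : Z × Y → ℝ}
    (h0 : ∀ x, 0 ≤ p x) (h1 : ∑ x, p x = 1) :
    shannon p ≤ shannon (fun z => ∑ y, p (z, y)) + shannon (fun y => ∑ z, p (z, y)) := by
  set qZ := fun z => ∑ y, p (z, y) with hqZdef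
  set qY := fun y => ∑ z, p (z, y) with hqYdef
  have hqZ0 : ∀ z, 0 ≤ qZ z := fun z => Finset.sum_nonneg fun y _ => h0 _
  have hqY0 : ∀ y, 0 ≤ qY y := fun y => Finset.sum_nonneg fun z _ => h0 _
  have hZs : ∑ z, qZ z = 1 := by rw [← h1, Fintype.sum_prod_type]
  have hYs : ∑ y, qY y = 1 := by rw [← h1, Fintype.sum_prod_type_right]
  have hpleZ : ∀ z y, p (z, y) ≤ qZ z := fun z y =>
    Finset.single_le_sum (fun y' (_ : y' ∈ Finset.univ) => h0 (z, y')) (Finset.mem_univ y)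
  have hpleY : ∀ z y, p (z, y) ≤ qY y := fun z y =>
    Finset.single_le_sum (fun z' (_ : z' ∈ Finset.univ) => h0 (z', y)) (Finset.mem_univ z)
  have hr0 : ∀ x : Z × Y, 0 ≤ qZ x.1 * qY x.2 := fun x => mul_nonneg (hqZ0 _) (hqY0 _)
  have hrs : ∑ x : Z × Y, qZ x.1 * qY x.2 = 1 := by
    rw [Fintype.sum_prod_type]
    simp only [← Finset.mul_sum]
    rw [← Finset.sum_mul, hZs, hYs, one_mul]
  have hdom : ∀ x : Z × Y, qZ x.1 * qY x.2 = 0 → p x = 0 := by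
    rintro ⟨z, y⟩ hx
    rcases mul_eq_zero.1 hx with h | h
    · exact le_antisymm (h ▸ hpleZ z y) (h0 _)
    · exact le_antisymm (h ▸ hpleY z y) (h0 _)
  refine (gibbs h0 h1 hr0 (le_of_eq hrs) hdom).trans (le_of_eq ?_)
  have hterm : ∀ x : Z × Y, p x * Real.log (qZ x.1 * qY x.2)
      = p x * Real.log (qZ x.1) + p x * Real.log (qY x.2) := by
    rintro ⟨z, y⟩
    rcases eq_or_lt_of_le (h0 (z, y)) with h | h
    · rw [← h]; ring
    · have hz : qZ z ≠ 0 := ne_of_gt (lt_of_lt_of_le h (hpleZ z y))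
      have hy : qY y ≠ 0 := ne_of_gt (lt_of_lt_of_le h (hpleY z y))
      rw [Real.log_mul hz hy]; ring
  have e1 : ∑ x : Z × Y, p x * Real.log (qZ x.1) = ∑ z, qZ z * Real.log (qZ z) := by
    rw [Fintype.sum_prod_type]
    exact Finset.sum_congr rfl fun z _ => by dsimp only; rw [← Finset.sum_mul]
  have e2 : ∑ x : Z × Y, p x * Real.log (qY x.2) = ∑ y, qY y * Real.log (qY y) := by
    rw [Fintype.sum_prod_type_right]
    exact Finset.sum_congr rfl fun y _ => by dsimp only; rw [← Finset.sum_mul]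
  unfold shannon
  rw [← e1, ← e2, ← neg_add, ← Finset.sum_add_distrib]
  congr 1
  exact Finset.sum_congr rfl fun x _ => hterm x

end Entropy
section Kernels

/-- The prefix set of parties `n` with `n.val < k`. -/
def Qset (N k : ℕ) : Finset (Fin N) := Finset.univ.filter (fun i => i.val < k)

lemma mem_Qset {N k : ℕ} {n : Fin N} : n ∈ Qset N k ↔ n.val < k := by
  simp [Qset]

lemma delta_prod {N d : ℕ} (u v : Fin N → Fin d) :
    (∏ n, if u n = v n then (1:ℂ) else 0) = if u = v then 1 else 0 := by
  by_cases h : u = v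
  · subst h; simp
  · rw [if_neg h]
    obtain ⟨n, hn⟩ := Function.ne_iff.1 h
    exact Finset.prod_eq_zero (Finset.mem_univ n) (if_neg hn)

/-- Completeness relation for an orthonormal basis. -/
lemma ONB_comp {d : ℕ} {B : Fin d → Fin d → ℂ} (hB : ONB B) (s t : Fin d) :
    (∑ a, B a s * (starRingEnd ℂ) (B a t)) = if s = t then 1 else 0 := by
  classical
  have h1 : (Matrix.of B) * (Matrix.of B).conjTranspose = 1 := by
    ext a b
    rw [Matrix.mul_apply, Matrix.one_apply]
    simp only [Matrix.conjTranspose_apply, Matrix.of_apply, RCLike.star_def]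
    rw [show (∑ j, B a j * (starRingEnd ℂ) (B b j))
        = ∑ j, (starRingEnd ℂ) (B b j) * B a j from
      Finset.sum_congr rfl fun j _ => mul_comm _ _, hB b a]
    by_cases h : a = b
    · rw [if_pos h.symm, if_pos h]
    · rw [if_neg (fun hh => h hh.symm), if_neg h]
  have h3 := mul_eq_one_comm.mp h1
  have h4 := congrFun (congrFun h3 t) s
  simp only [Matrix.mul_apply, Matrix.conjTranspose_apply, Matrix.one_apply,
    Matrix.of_apply, RCLike.star_def] at h4
  rw [show (∑ a, B a s * (starRingEnd ℂ) (B a t)) = ∑ a, (starRingEnd ℂ) (B a t) * B a s from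
    Finset.sum_congr rfl fun a _ => mul_comm _ _, h4]
  by_cases h : s = t
  · rw [if_pos h.symm, if_pos h]
  · rw [if_neg (fun hh => h hh.symm), if_neg h]

lemma sum_kernel_swap {α ι : Type*} [Fintype α] [Fintype ι] (K : ι → α → α → ℂ)
    (ρ : Matrix α α ℂ) :
    ∑ c, ∑ s, ∑ t, K c s t * ρ t s = ∑ s, ∑ t, (∑ c, K c s t) * ρ t s := by
  rw [Finset.sum_comm]
  refine Finset.sum_congr rfl fun s _ => ?_
  rw [Finset.sum_comm]
  refine Finset.sum_congr rfl fun t _ => ?_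
  rw [Finset.sum_mul]

lemma gram_re_nonneg {α : Type*} [Fintype α] [DecidableEq α] {ρ : Matrix α α ℂ}
    (hρ : ρ.PosSemidef) {ι : Type*} [Fintype ι] (w : ι → α → ℂ) :
    0 ≤ (∑ s, ∑ t, (∑ c, w c s * (starRingEnd ℂ) (w c t)) * ρ t s).re := by
  have key : ∀ c : ι, (∑ s, ∑ t, (w c s * (starRingEnd ℂ) (w c t)) * ρ t s)
      = dotProduct (star (w c)) (ρ.mulVec (w c)) := by
    intro c
    rw [Finset.sum_comm]
    simp only [dotProduct, Matrix.mulVec, Pi.star_apply, Finset.mul_sum]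
    exact Finset.sum_congr rfl fun t _ => Finset.sum_congr rfl fun s _ => by
      simp only [RCLike.star_def]; ring
  rw [← sum_kernel_swap (fun c s t => w c s * (starRingEnd ℂ) (w c t)) ρ]
  rw [Finset.sum_congr rfl fun c _ => key c, Complex.re_sum]
  exact Finset.sum_nonneg fun c _ => (Complex.nonneg_iff.mp (hρ.dotProduct_mulVec_nonneg _)).1

lemma sum_prod_collapse {ι : Type*} [Fintype ι] [DecidableEq ι] {d : ℕ}
    (g : ι → Fin d → ℂ) :
    ∑ c : ι → Fin d, ∏ n, g n (c n) = ∏ n, ∑ a, g n a := by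
  rw [Finset.prod_univ_sum]
  rw [Fintype.piFinset_univ]

end Kernels
section Positivity

lemma segProb_congr {N d : ℕ} (ρ : Matrix (Fin N → Fin d) (Fin N → Fin d) ℂ)
    (A : Finset (Fin N)) {B B' : Fin N → Fin d → Fin d → ℂ} {y y' : Fin N → Fin d}
    (hB : ∀ n ∈ A, B n = B' n) (hy : ∀ n ∈ A, y n = y' n) :
    segProb ρ A B y = segProb ρ A B' y' := by
  unfold segProb
  refine congrArg Complex.re (Finset.sum_congr rfl fun s _ =>
    Finset.sum_congr rfl fun t _ => ?_)
  congr 1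
  refine Finset.prod_congr rfl fun n _ => ?_
  by_cases h : n ∈ A
  · rw [if_pos h, if_pos h, hB n h, hy n h]
  · rw [if_neg h, if_neg h]

lemma segProb_nonneg {N d : ℕ} [NeZero d] {ρ : Matrix (Fin N → Fin d) (Fin N → Fin d) ℂ}
    (hρ : ρ.PosSemidef) (A : Finset (Fin N)) (B : Fin N → Fin d → Fin d → ℂ)
    (y : Fin N → Fin d) : 0 ≤ segProb ρ A B y := by
  classical
  unfold segProb
  set w : (Fin N → Fin d) → (Fin N → Fin d) → ℂ := fun c s =>
    ∏ n, if n ∈ A then (if c n = 0 then B n (y n) (s n) else 0)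
      else (if s n = c n then 1 else 0) with hw
  have hker : ∀ s t : Fin N → Fin d,
      (∏ n, if n ∈ A then B n (y n) (s n) * (starRingEnd ℂ) (B n (y n) (t n))
        else if s n = t n then (1:ℂ) else 0)
      = ∑ c : Fin N → Fin d, w c s * (starRingEnd ℂ) (w c t) := by
    intro s t
    have step1 : ∀ c, w c s * (starRingEnd ℂ) (w c t)
        = ∏ n, ((if n ∈ A then (if c n = 0 then B n (y n) (s n) * (starRingEnd ℂ) (B n (y n) (t n)) else 0)
            else ((if s n = c n then (1:ℂ) else 0) * (if t n = c n then 1 else 0)))) := by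
      intro c
      rw [hw]
      simp only [map_prod, ← Finset.prod_mul_distrib]
      refine Finset.prod_congr rfl fun n _ => ?_
      by_cases h : n ∈ A
      · simp only [if_pos h]
        by_cases h0 : c n = 0 <;> simp [h0]
      · simp only [if_neg h]
        by_cases h1 : s n = c n <;> by_cases h2 : t n = c n <;> simp [h1, h2]
    rw [Finset.sum_congr rfl fun c _ => step1 c]
    have hc := sum_prod_collapse (fun (n : Fin N) (a : Fin d) =>
      if n ∈ A then (if a = 0 then B n (y n) (s n) * (starRingEnd ℂ) (B n (y n) (t n)) else 0)
      else ((if s n = a then (1:ℂ) else 0) * (if t n = a then 1 else 0)))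
    rw [hc]
    refine (Finset.prod_congr rfl fun n _ => ?_).symm
    by_cases h : n ∈ A
    · simp only [if_pos h]
      rw [Finset.sum_ite_eq' Finset.univ (0 : Fin d)
        (fun _ => B n (y n) (s n) * (starRingEnd ℂ) (B n (y n) (t n)))]
      simp
    · simp only [if_neg h, ite_mul, one_mul, zero_mul]
      rw [Finset.sum_ite_eq Finset.univ (s n) (fun a => if t n = a then (1:ℂ) else 0)]
      simp only [Finset.mem_univ, if_true]
      by_cases h1 : s n = t n
      · simp [h1]
      · rw [if_neg (fun hh => h1 hh.symm), if_neg h1]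
  simp only [hker]
  exact gram_re_nonneg hρ w

lemma prefSegProb_nonneg {N d : ℕ} [NeZero d] {ρ : Matrix (Fin N → Fin d) (Fin N → Fin d) ℂ}
    (hρ : ρ.PosSemidef) (m l : ℕ) {Z : Type} [Fintype Z]
    {E : Z → Matrix (Fin (min (m * l) N) → Fin d) (Fin (min (m * l) N) → Fin d) ℂ}
    (hE : ∀ z, (E z).PosSemidef) (B : Fin N → Fin d → Fin d → ℂ) (z : Z)
    (y : Fin N → Fin d) : 0 ≤ prefSegProb ρ m l E B z y := by
  classical
  obtain ⟨C, hC⟩ : ∃ C : Matrix (Fin (min (m * l) N) → Fin d) (Fin (min (m * l) N) → Fin d) ℂ,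
      E z = C.conjTranspose * C := by
    open scoped MatrixOrder Matrix.Norms.L2Operator in
    obtain ⟨C, hC⟩ := CStarAlgebra.nonneg_iff_eq_star_mul_self.mp (hE z).nonneg
    exact ⟨C, hC⟩
  unfold prefSegProb
  set pre : (Fin N → Fin d) → (Fin (min (m * l) N) → Fin d) :=
    fun s i => s (Fin.castLE (Nat.min_le_right _ _) i) with hpre
  set w : ((Fin (min (m * l) N) → Fin d) × (Fin N → Fin d)) → (Fin N → Fin d) → ℂ :=
    fun kc s => (starRingEnd ℂ) (C kc.1 (pre s)) *
      ∏ n, if n ∈ seg N m l then (if kc.2 n = 0 then B n (y n) (s n) else 0)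
        else if n.val < m * l then (if kc.2 n = 0 then (1:ℂ) else 0)
        else (if s n = kc.2 n then 1 else 0) with hwdef
  have hker : ∀ s t : Fin N → Fin d,
      E z (pre s) (pre t) *
        (∏ n, if n ∈ seg N m l then B n (y n) (s n) * (starRingEnd ℂ) (B n (y n) (t n))
          else if n.val < m * l then (1:ℂ) else if s n = t n then 1 else 0)
      = ∑ kc : (Fin (min (m * l) N) → Fin d) × (Fin N → Fin d),
          w kc s * (starRingEnd ℂ) (w kc t) := by
    intro s t
    rw [Fintype.sum_prod_type]
    have step1 : ∀ k c, w (k, c) s * (starRingEnd ℂ) (w (k, c) t)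
        = ((starRingEnd ℂ) (C k (pre s)) * C k (pre t)) *
          ∏ n, ((if n ∈ seg N m l then (if c n = 0 then B n (y n) (s n) * (starRingEnd ℂ) (B n (y n) (t n)) else 0)
            else if n.val < m * l then (if c n = 0 then (1:ℂ) else 0)
            else ((if s n = c n then (1:ℂ) else 0) * (if t n = c n then 1 else 0)))) := by
      intro k c
      rw [hwdef]
      simp only [map_mul, map_prod, Complex.conj_conj]
      rw [show ((starRingEnd ℂ) (C k (pre s)) *
            ∏ n, (if n ∈ seg N m l then (if c n = 0 then B n (y n) (s n) else 0)
              else if n.val < m * l then (if c n = 0 then (1:ℂ) else 0)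
              else (if s n = c n then 1 else 0))) *
          (C k (pre t) *
            ∏ n, (starRingEnd ℂ) (if n ∈ seg N m l then (if c n = 0 then B n (y n) (t n) else 0)
              else if n.val < m * l then (if c n = 0 then (1:ℂ) else 0)
              else (if t n = c n then 1 else 0)))
          = ((starRingEnd ℂ) (C k (pre s)) * C k (pre t)) *
            ((∏ n, (if n ∈ seg N m l then (if c n = 0 then B n (y n) (s n) else 0)
              else if n.val < m * l then (if c n = 0 then (1:ℂ) else 0)
              else (if s n = c n then 1 else 0))) *
            (∏ n, (starRingEnd ℂ) (if n ∈ seg N m l then (if c n = 0 then B n (y n) (t n) else 0)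
              else if n.val < m * l then (if c n = 0 then (1:ℂ) else 0)
              else (if t n = c n then 1 else 0)))) from by ring]
      rw [← Finset.prod_mul_distrib]
      congr 1
      refine Finset.prod_congr rfl fun n _ => ?_
      by_cases h : n ∈ seg N m l
      · simp only [if_pos h]
        by_cases h0 : c n = 0 <;> simp [h0]
      · simp only [if_neg h]
        by_cases h2 : n.val < m * l
        · simp only [if_pos h2]
          by_cases h0 : c n = 0 <;> simp [h0]
        · simp only [if_neg h2]
          by_cases h1 : s n = c n <;> by_cases h3 : t n = c n <;> simp [h1, h3]
    rw [Finset.sum_congr rfl fun k _ => Finset.sum_congr rfl fun c _ => step1 k c]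
    have step2 : ∀ k : Fin (min (m * l) N) → Fin d,
        (∑ c : Fin N → Fin d, ((starRingEnd ℂ) (C k (pre s)) * C k (pre t)) *
          ∏ n, ((if n ∈ seg N m l then (if c n = 0 then B n (y n) (s n) * (starRingEnd ℂ) (B n (y n) (t n)) else 0)
            else if n.val < m * l then (if c n = 0 then (1:ℂ) else 0)
            else ((if s n = c n then (1:ℂ) else 0) * (if t n = c n then 1 else 0)))))
        = ((starRingEnd ℂ) (C k (pre s)) * C k (pre t)) *
          (∏ n, if n ∈ seg N m l then B n (y n) (s n) * (starRingEnd ℂ) (B n (y n) (t n))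
            else if n.val < m * l then (1:ℂ) else if s n = t n then 1 else 0) := by
      intro k
      rw [← Finset.mul_sum]
      have hc := sum_prod_collapse (fun (n : Fin N) (a : Fin d) =>
        if n ∈ seg N m l then (if a = 0 then B n (y n) (s n) * (starRingEnd ℂ) (B n (y n) (t n)) else 0)
        else if n.val < m * l then (if a = 0 then (1:ℂ) else 0)
        else ((if s n = a then (1:ℂ) else 0) * (if t n = a then 1 else 0)))
      rw [hc]
      congr 1
      refine Finset.prod_congr rfl fun n _ => ?_
      by_cases h : n ∈ seg N m l
      · simp only [if_pos h]
        rw [Finset.sum_ite_eq' Finset.univ (0 : Fin d)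
          (fun _ => B n (y n) (s n) * (starRingEnd ℂ) (B n (y n) (t n)))]
        simp
      · simp only [if_neg h]
        by_cases h2 : n.val < m * l
        · simp only [if_pos h2]
          rw [Finset.sum_ite_eq' Finset.univ (0 : Fin d) (fun _ => (1:ℂ))]
          simp
        · simp only [if_neg h2, ite_mul, one_mul, zero_mul]
          rw [Finset.sum_ite_eq Finset.univ (s n) (fun a => if t n = a then (1:ℂ) else 0)]
          simp only [Finset.mem_univ, if_true]
          by_cases h1 : s n = t n
          · simp [h1]
          · rw [if_neg (fun hh => h1 hh.symm), if_neg h1]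
    rw [Finset.sum_congr rfl fun k _ => step2 k]
    rw [← Finset.sum_mul]
    congr 1
    rw [hC, Matrix.mul_apply]
    exact (Finset.sum_congr rfl fun k _ => by rw [Matrix.conjTranspose_apply, RCLike.star_def]).symm
  refine le_of_le_of_eq (gram_re_nonneg hρ w) (congrArg Complex.re
    (Finset.sum_congr rfl fun s _ => Finset.sum_congr rfl fun t _ => by rw [← hker s t]))

end Positivity
section Marginal

lemma indicator_prod {N d : ℕ} [NeZero d] (T : Finset (Fin N)) (c : Fin N → Fin d) :
    (if (∀ n, n ∉ T → c n = 0) then (1:ℂ) else 0)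
    = ∏ n, (if n ∈ T then 1 else if c n = 0 then 1 else 0) := by
  by_cases h : ∀ n, n ∉ T → c n = 0
  · rw [if_pos h]
    exact (Finset.prod_eq_one fun n _ => by
      by_cases hn : n ∈ T
      · rw [if_pos hn]
      · rw [if_neg hn, if_pos (h n hn)]).symm
  · rw [if_neg h]
    push_neg at h
    obtain ⟨n, hn1, hn2⟩ := h
    exact (Finset.prod_eq_zero (Finset.mem_univ n) (by rw [if_neg hn1, if_neg hn2])).symm

lemma segProb_marg {N d : ℕ} [NeZero d] (ρ : Matrix (Fin N → Fin d) (Fin N → Fin d) ℂ)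
    {B : Fin N → Fin d → Fin d → ℂ} (hB : ∀ n, ONB (B n))
    (A' T : Finset (Fin N)) (hT : T ⊆ A') (y : Fin N → Fin d) :
    ∑ c : Fin N → Fin d, (if ∀ n, n ∉ T → c n = 0
        then segProb ρ A' B (fun n => if n ∈ T then c n else y n) else 0)
    = segProb ρ (A' \ T) B y := by
  classical
  unfold segProb
  have e1 : ∀ c : Fin N → Fin d,
      (if (∀ n, n ∉ T → c n = 0)
        then (∑ s, ∑ t, (∏ n, if n ∈ A'
            then B n (if n ∈ T then c n else y n) (s n) *
              (starRingEnd ℂ) (B n (if n ∈ T then c n else y n) (t n))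
            else if s n = t n then (1:ℂ) else 0) * ρ t s).re else 0)
      = (if (∀ n, n ∉ T → c n = 0)
        then (∑ s, ∑ t, (∏ n, if n ∈ A'
            then B n (if n ∈ T then c n else y n) (s n) *
              (starRingEnd ℂ) (B n (if n ∈ T then c n else y n) (t n))
            else if s n = t n then (1:ℂ) else 0) * ρ t s) else 0).re := by
    intro c
    rw [apply_ite Complex.re, Complex.zero_re]
  rw [Finset.sum_congr rfl fun c _ => e1 c, ← Complex.re_sum]
  refine congrArg Complex.re ?_
  have e2 : ∀ c : Fin N → Fin d,
      (if (∀ n, n ∉ T → c n = 0)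
        then (∑ s, ∑ t, (∏ n, if n ∈ A'
            then B n (if n ∈ T then c n else y n) (s n) *
              (starRingEnd ℂ) (B n (if n ∈ T then c n else y n) (t n))
            else if s n = t n then (1:ℂ) else 0) * ρ t s) else 0)
      = ∑ s, ∑ t, ((∏ n, if n ∈ T then (1:ℂ) else if c n = 0 then 1 else 0) *
          (∏ n, if n ∈ A'
            then B n (if n ∈ T then c n else y n) (s n) *
              (starRingEnd ℂ) (B n (if n ∈ T then c n else y n) (t n))
            else if s n = t n then (1:ℂ) else 0)) * ρ t s := by
    intro c
    rw [← indicator_prod]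
    by_cases h : ∀ n, n ∉ T → c n = 0
    · rw [if_pos h, if_pos h]
      simp only [one_mul]
    · rw [if_neg h, if_neg h]
      simp only [zero_mul, Finset.sum_const_zero]
  rw [Finset.sum_congr rfl fun c _ => e2 c]
  rw [sum_kernel_swap]
  refine Finset.sum_congr rfl fun s _ => Finset.sum_congr rfl fun t _ => ?_
  congr 1
  -- kernel identity at (s, t)
  have e3 : ∀ c : Fin N → Fin d,
      ((∏ n, if n ∈ T then (1:ℂ) else if c n = 0 then 1 else 0) *
        (∏ n, if n ∈ A'
          then B n (if n ∈ T then c n else y n) (s n) *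
            (starRingEnd ℂ) (B n (if n ∈ T then c n else y n) (t n))
          else if s n = t n then (1:ℂ) else 0))
      = ∏ n, ((if n ∈ T then (1:ℂ) else if c n = 0 then 1 else 0) *
          (if n ∈ A'
            then B n (if n ∈ T then c n else y n) (s n) *
              (starRingEnd ℂ) (B n (if n ∈ T then c n else y n) (t n))
            else if s n = t n then (1:ℂ) else 0)) := fun c =>
    (Finset.prod_mul_distrib).symm
  rw [Finset.sum_congr rfl fun c _ => e3 c]
  have hc := sum_prod_collapse (fun (n : Fin N) (a : Fin d) =>
    (if n ∈ T then (1:ℂ) else if a = 0 then 1 else 0) *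
      (if n ∈ A'
        then B n (if n ∈ T then a else y n) (s n) *
          (starRingEnd ℂ) (B n (if n ∈ T then a else y n) (t n))
        else if s n = t n then (1:ℂ) else 0))
  rw [hc]
  refine Finset.prod_congr rfl fun n _ => ?_
  by_cases hnT : n ∈ T
  · have hnA : n ∈ A' := hT hnT
    have hnd : n ∉ A' \ T := by simp [hnT]
    simp only [if_pos hnT, if_pos hnA, if_neg hnd, one_mul]
    exact ONB_comp (hB n) (s n) (t n)
  · by_cases hnA : n ∈ A'
    · have hnd : n ∈ A' \ T := Finset.mem_sdiff.2 ⟨hnA, hnT⟩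
      simp only [if_neg hnT, if_pos hnA, if_pos hnd, ite_mul, one_mul, zero_mul]
      rw [Finset.sum_ite_eq' Finset.univ (0 : Fin d)]
      simp
    · have hnd : n ∉ A' \ T := by simp [hnA]
      simp only [if_neg hnT, if_neg hnA, if_neg hnd, ite_mul, one_mul, zero_mul]
      rw [Finset.sum_ite_eq' Finset.univ (0 : Fin d)]
      simp

end Marginal
section POVM

lemma mem_seg {N m l : ℕ} {n : Fin N} :
    n ∈ seg N m l ↔ m * l ≤ n.val ∧ n.val < m * l + l := by
  simp [seg]

/-- The rank-one projective POVM on the prefix parties obtained from the bases `B`. -/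
def projPOVM {N d : ℕ} (B : Fin N → Fin d → Fin d → ℂ) (m l : ℕ) :
    (Fin (min (m * l) N) → Fin d) →
      Matrix (Fin (min (m * l) N) → Fin d) (Fin (min (m * l) N) → Fin d) ℂ :=
  fun z => Matrix.of fun u v =>
    ∏ i, B (Fin.castLE (Nat.min_le_right _ _) i) (z i) (u i) *
      (starRingEnd ℂ) (B (Fin.castLE (Nat.min_le_right _ _) i) (z i) (v i))

lemma projPOVM_isPOVM {N d : ℕ} {B : Fin N → Fin d → Fin d → ℂ} (hB : ∀ n, ONB (B n))
    (m l : ℕ) : IsPOVM (projPOVM B m l) := by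
  classical
  constructor
  · intro z
    set w : (Fin (min (m * l) N) → Fin d) → ℂ :=
      fun u => ∏ i, B (Fin.castLE (Nat.min_le_right _ _) i) (z i) (u i) with hwdef
    have hw : ∀ u v, (projPOVM B m l z) u v = w u * (starRingEnd ℂ) (w v) := by
      intro u v
      simp only [projPOVM, Matrix.of_apply, hwdef, map_prod]
      rw [Finset.prod_mul_distrib]
    refine Matrix.PosSemidef.of_dotProduct_mulVec_nonneg ?_ ?_
    · ext u v
      rw [Matrix.conjTranspose_apply, hw, hw, RCLike.star_def, map_mul, Complex.conj_conj]
      ring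
    · intro x
      have key : dotProduct (star x) ((projPOVM B m l z).mulVec x)
          = star (∑ v, (starRingEnd ℂ) (w v) * x v) * (∑ v, (starRingEnd ℂ) (w v) * x v) := by
        rw [show star (∑ v, (starRingEnd ℂ) (w v) * x v)
            = ∑ u, (starRingEnd ℂ) (x u) * w u from by
          rw [star_sum]
          exact Finset.sum_congr rfl fun u _ => by
            rw [star_mul']
            simp only [RCLike.star_def, Complex.conj_conj]
            ring]
        rw [Finset.sum_mul_sum]
        simp only [dotProduct, Matrix.mulVec, Pi.star_apply, Finset.mul_sum,
          RCLike.star_def]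
        refine Finset.sum_congr rfl fun u _ => Finset.sum_congr rfl fun v _ => ?_
        rw [hw u v]; ring
      rw [key]
      exact star_mul_self_nonneg _
  · ext u v
    rw [Matrix.sum_apply]
    simp only [projPOVM, Matrix.of_apply]
    have hc := sum_prod_collapse (fun (i : Fin (min (m * l) N)) (a : Fin d) =>
      B (Fin.castLE (Nat.min_le_right _ _) i) a (u i) *
        (starRingEnd ℂ) (B (Fin.castLE (Nat.min_le_right _ _) i) a (v i)))
    rw [hc, Finset.prod_congr rfl fun i _ =>
      ONB_comp (hB (Fin.castLE (Nat.min_le_right _ _) i)) (u i) (v i), delta_prod,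
      Matrix.one_apply]

/-- Combine prefix outcomes and segment outcomes into a single outcome function. -/
def combZ {N d : ℕ} [NeZero d] (m l : ℕ) (z : Fin (min (m * l) N) → Fin d)
    (y : Fin N → Fin d) : Fin N → Fin d :=
  fun n => if h : n.val < m * l then z ⟨n.val, lt_min h n.isLt⟩
    else if n ∈ seg N m l then y n else 0

lemma prod_castLE {N : ℕ} {k : ℕ} (hk : k ≤ N) (G : Fin N → ℂ) :
    ∏ i : Fin k, G (Fin.castLE hk i) = ∏ n : Fin N, (if n.val < k then G n else 1) := by
  classical
  rw [Finset.prod_ite, Finset.prod_const_one, mul_one]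
  refine Finset.prod_bij' (fun i _ => Fin.castLE hk i)
    (fun n hn => ⟨n.val, by simpa using hn⟩) ?_ ?_ ?_ ?_ ?_
  · intro i _
    simp [Fin.castLE]
  · intro n hn
    exact Finset.mem_univ _
  · intro i _
    exact Fin.ext rfl
  · intro n hn
    exact Fin.ext rfl
  · intro i _
    rfl

/-- The joint probability of a prefix projective measurement and a segment measurement is a
Born probability for the measurement of all parties up to the end of the segment. -/
lemma prefSegProb_proj {N d : ℕ} [NeZero d] (ρ : Matrix (Fin N → Fin d) (Fin N → Fin d) ℂ)
    (B : Fin N → Fin d → Fin d → ℂ) (m l : ℕ)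
    (z : Fin (min (m * l) N) → Fin d) (y : Fin N → Fin d) :
    prefSegProb ρ m l (projPOVM B m l) B z y
    = segProb ρ (Qset N ((m + 1) * l)) B (combZ m l z y) := by
  classical
  unfold prefSegProb segProb
  refine congrArg Complex.re (Finset.sum_congr rfl fun s _ =>
    Finset.sum_congr rfl fun t _ => ?_)
  congr 1
  set G : Fin N → ℂ := fun n => if h : n.val < min (m * l) N
    then B n (z ⟨n.val, h⟩) (s n) * (starRingEnd ℂ) (B n (z ⟨n.val, h⟩) (t n)) else 1
    with hGdef
  have h1 : projPOVM B m l z (fun i => s (Fin.castLE (Nat.min_le_right _ _) i))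
      (fun i => t (Fin.castLE (Nat.min_le_right _ _) i))
      = ∏ n : Fin N, (if n.val < min (m * l) N then G n else 1) := by
    rw [← prod_castLE (Nat.min_le_right (m * l) N) G]
    simp only [projPOVM, Matrix.of_apply]
    refine Finset.prod_congr rfl fun i _ => ?_
    simp only [hGdef]
    rw [dif_pos (show (Fin.castLE (Nat.min_le_right (m*l) N) i).val < min (m * l) N from i.isLt)]
    rfl
  rw [h1, ← Finset.prod_mul_distrib]
  refine Finset.prod_congr rfl fun n _ => ?_
  by_cases hlt : n.val < m * l
  · have hmin : n.val < min (m * l) N := lt_min hlt n.isLt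
    have hseg : n ∉ seg N m l := by
      rw [mem_seg]; omega
    have hQ : n ∈ Qset N ((m + 1) * l) := by
      rw [mem_Qset]; have : (m + 1) * l = m * l + l := by ring
      omega
    rw [if_pos hmin, if_neg hseg, if_pos hlt, if_pos hQ, mul_one]
    simp only [hGdef]
    rw [dif_pos hmin]
    have hcz : combZ m l z y n = z ⟨n.val, hmin⟩ := by
      unfold combZ
      rw [dif_pos hlt]
    rw [hcz]
  · have hmin : ¬ n.val < min (m * l) N := fun h => hlt (lt_of_lt_of_le h (Nat.min_le_left _ _))
    rw [if_neg hmin, one_mul]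
    by_cases hseg : n ∈ seg N m l
    · have hQ : n ∈ Qset N ((m + 1) * l) := by
        rw [mem_Qset]
        have h2 := mem_seg.mp hseg
        have : (m + 1) * l = m * l + l := by ring
        omega
      have hcz : combZ m l z y n = y n := by
        unfold combZ
        rw [dif_neg hlt, if_pos hseg]
      rw [if_pos hseg, if_pos hQ, hcz]
    · have hQ : n ∉ Qset N ((m + 1) * l) := by
        rw [mem_Qset]
        have h2 : ¬ (m * l ≤ n.val ∧ n.val < m * l + l) := fun h => hseg (mem_seg.mpr h)
        have : (m + 1) * l = m * l + l := by ring
        omega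
      rw [if_neg hseg, if_neg hlt, if_neg hQ]

end POVM
section Glue

/-- Embed prefix outcomes as a full outcome function (zero elsewhere). -/
def extZ {N d : ℕ} [NeZero d] (m l : ℕ) (z : Fin (min (m * l) N) → Fin d) : Fin N → Fin d :=
  fun n => if h : n.val < m * l then z ⟨n.val, lt_min h n.isLt⟩ else 0

lemma sum_extZ {N d : ℕ} [NeZero d] (m l : ℕ) (F : (Fin N → Fin d) → ℝ) :
    ∑ z : Fin (min (m * l) N) → Fin d, F (extZ m l z)
    = ∑ c : Fin N → Fin d, (if ∀ n, n ∉ Qset N (m * l) → c n = 0 then F c else 0) := by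
  classical
  rw [← Finset.sum_filter]
  refine Finset.sum_bij' (fun z (_ : z ∈ Finset.univ) => extZ m l z)
    (fun c _ => fun i => c (Fin.castLE (Nat.min_le_right _ _) i)) ?_ ?_ ?_ ?_ ?_
  · intro z _
    rw [Finset.mem_filter]
    refine ⟨Finset.mem_univ _, fun n hn => ?_⟩
    rw [mem_Qset] at hn
    simp only [extZ]
    rw [dif_neg hn]
  · intro c _
    exact Finset.mem_univ _
  · intro z _
    funext i
    simp only [extZ]
    rw [dif_pos (show (Fin.castLE (Nat.min_le_right (m*l) N) i).val < m * l from
      lt_of_lt_of_le i.isLt (Nat.min_le_left _ _))]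
    exact congrArg z (Fin.ext rfl)
  · intro c hc
    rw [Finset.mem_filter] at hc
    funext n
    simp only [extZ]
    by_cases h : n.val < m * l
    · rw [dif_pos h]
      exact congrArg c (Fin.ext rfl)
    · rw [dif_neg h]
      exact (hc.2 n (by rw [mem_Qset]; exact h)).symm
  · intro z _
    rfl

lemma sum_combZ {N d : ℕ} [NeZero d] (m l : ℕ) (F : (Fin N → Fin d) → ℝ) :
    ∑ z : Fin (min (m * l) N) → Fin d, ∑ y : Fin N → Fin d,
      (if ∀ n, n ∉ seg N m l → y n = 0 then F (combZ m l z y) else 0)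
    = ∑ c : Fin N → Fin d, (if ∀ n, n ∉ Qset N ((m + 1) * l) → c n = 0 then F c else 0) := by
  classical
  have hml : (m + 1) * l = m * l + l := by ring
  simp only [← Finset.sum_filter]
  rw [← Finset.sum_product']
  refine Finset.sum_bij' (fun zy (_ : zy ∈ Finset.univ ×ˢ _) => combZ m l zy.1 zy.2)
    (fun c _ => (fun i => c (Fin.castLE (Nat.min_le_right _ _) i),
      fun n => if n ∈ seg N m l then c n else 0)) ?_ ?_ ?_ ?_ ?_
  · rintro ⟨z, y⟩ _
    rw [Finset.mem_filter]
    refine ⟨Finset.mem_univ _, fun n hn => ?_⟩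
    rw [mem_Qset] at hn
    have h1 : ¬ n.val < m * l := by omega
    have h2 : n ∉ seg N m l := by rw [mem_seg]; omega
    simp only [combZ]
    rw [dif_neg h1, if_neg h2]
  · intro c _
    rw [Finset.mem_product]
    refine ⟨Finset.mem_univ _, ?_⟩
    rw [Finset.mem_filter]
    exact ⟨Finset.mem_univ _, fun n hn => if_neg hn⟩
  · rintro ⟨z, y⟩ hzy
    rw [Finset.mem_product, Finset.mem_filter] at hzy
    refine Prod.ext ?_ ?_
    · funext i
      show combZ m l z y (Fin.castLE _ i) = z i
      simp only [combZ]
      rw [dif_pos (show (Fin.castLE (Nat.min_le_right (m*l) N) i).val < m * l from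
        lt_of_lt_of_le i.isLt (Nat.min_le_left _ _))]
      exact congrArg z (Fin.ext rfl)
    · funext n
      show (if n ∈ seg N m l then combZ m l z y n else 0) = y n
      by_cases h : n ∈ seg N m l
      · rw [if_pos h]
        simp only [combZ]
        have h1 : ¬ n.val < m * l := by
          have := mem_seg.mp h; omega
        rw [dif_neg h1, if_pos h]
      · rw [if_neg h]
        exact (hzy.2.2 n h).symm
  · intro c hc
    rw [Finset.mem_filter] at hc
    funext n
    simp only [combZ]
    by_cases h1 : n.val < m * l
    · rw [dif_pos h1]
      exact congrArg c (Fin.ext rfl)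
    · rw [dif_neg h1]
      by_cases h2 : n ∈ seg N m l
      · simp [h2]
      · rw [if_neg h2]
        refine (hc.2 n ?_).symm
        rw [mem_Qset]
        have := mem_seg.not.mp h2
        omega
  · rintro ⟨z, y⟩ _
    rfl

lemma segProb_univ {N d : ℕ} (ρ : Matrix (Fin N → Fin d) (Fin N → Fin d) ℂ)
    (B : Fin N → Fin d → Fin d → ℂ) (y : Fin N → Fin d) :
    segProb ρ Finset.univ B y = locProb ρ B y := by
  unfold segProb locProb
  refine congrArg Complex.re (Finset.sum_congr rfl fun s _ =>
    Finset.sum_congr rfl fun t _ => ?_)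
  congr 1
  exact Finset.prod_congr rfl fun n _ => if_pos (Finset.mem_univ n)

lemma segDist_univ {N d : ℕ} [NeZero d] (ρ : Matrix (Fin N → Fin d) (Fin N → Fin d) ℂ)
    (B : Fin N → Fin d → Fin d → ℂ) : segDist ρ Finset.univ B = locProb ρ B := by
  funext y
  unfold segDist
  rw [if_pos (fun n hn => absurd (Finset.mem_univ n) hn), segProb_univ]

lemma segProb_empty {N d : ℕ} {ρ : Matrix (Fin N → Fin d) (Fin N → Fin d) ℂ}
    (hρ : IsDensity ρ) (B : Fin N → Fin d → Fin d → ℂ) (y : Fin N → Fin d) :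
    segProb ρ (∅ : Finset (Fin N)) B y = 1 := by
  classical
  unfold segProb
  have h1 : ∀ s t : Fin N → Fin d,
      (∏ n, if n ∈ (∅ : Finset (Fin N)) then B n (y n) (s n) * (starRingEnd ℂ) (B n (y n) (t n))
        else if s n = t n then (1:ℂ) else 0) = if s = t then 1 else 0 := by
    intro s t
    rw [Finset.prod_congr rfl fun n _ => if_neg (Finset.notMem_empty n), delta_prod]
  simp only [h1]
  have h2 : (∑ s, ∑ t, (if s = t then (1:ℂ) else 0) * ρ t s) = ρ.trace := by
    rw [Matrix.trace]
    refine Finset.sum_congr rfl fun s _ => ?_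
    simp only [ite_mul, one_mul, zero_mul]
    rw [Finset.sum_ite_eq Finset.univ s (fun t => ρ t s)]
    simp [Matrix.diag]
  rw [h2, hρ.2, Complex.one_re]

lemma segDist_sum {N d : ℕ} [NeZero d] {ρ : Matrix (Fin N → Fin d) (Fin N → Fin d) ℂ}
    (hρ : IsDensity ρ) {B : Fin N → Fin d → Fin d → ℂ} (hB : ∀ n, ONB (B n))
    (A : Finset (Fin N)) : ∑ y, segDist ρ A B y = 1 := by
  classical
  unfold segDist
  have key := segProb_marg ρ hB A A (subset_refl A) (fun _ => 0)
  rw [Finset.sdiff_self] at key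
  rw [show (∑ y, if ∀ n, n ∉ A → y n = 0 then segProb ρ A B y else 0)
      = ∑ c : Fin N → Fin d, (if ∀ n, n ∉ A → c n = 0
        then segProb ρ A B (fun n => if n ∈ A then c n else 0) else 0) from
    Finset.sum_congr rfl fun c _ => by
      by_cases h : ∀ n, n ∉ A → c n = 0
      · rw [if_pos h, if_pos h]
        refine segProb_congr ρ A (fun n _ => rfl) fun n hn => (if_pos hn).symm
      · rw [if_neg h, if_neg h], key]
  exact segProb_empty hρ B _

lemma locProb_sum {N d : ℕ} [NeZero d] {ρ : Matrix (Fin N → Fin d) (Fin N → Fin d) ℂ}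
    (hρ : IsDensity ρ) {B : Fin N → Fin d → Fin d → ℂ} (hB : ∀ n, ONB (B n)) :
    ∑ y, locProb ρ B y = 1 := by
  rw [← segDist_univ ρ B]
  exact segDist_sum hρ hB Finset.univ

lemma locProb_nonneg {N d : ℕ} [NeZero d] {ρ : Matrix (Fin N → Fin d) (Fin N → Fin d) ℂ}
    (hρ : IsDensity ρ) (B : Fin N → Fin d → Fin d → ℂ) (y : Fin N → Fin d) :
    0 ≤ locProb ρ B y := by
  rw [← segProb_univ ρ B]
  exact segProb_nonneg hρ.1 _ B y

lemma locProb_le_one {N d : ℕ} [NeZero d] {ρ : Matrix (Fin N → Fin d) (Fin N → Fin d) ℂ}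
    (hρ : IsDensity ρ) {B : Fin N → Fin d → Fin d → ℂ} (hB : ∀ n, ONB (B n))
    (y : Fin N → Fin d) : locProb ρ B y ≤ 1 := by
  rw [← locProb_sum hρ hB]
  exact Finset.single_le_sum (fun y' (_ : y' ∈ Finset.univ) => locProb_nonneg hρ B y')
    (Finset.mem_univ y)

lemma segDist_nonneg {N d : ℕ} [NeZero d] {ρ : Matrix (Fin N → Fin d) (Fin N → Fin d) ℂ}
    (hρ : IsDensity ρ) (A : Finset (Fin N)) (B : Fin N → Fin d → Fin d → ℂ)
    (y : Fin N → Fin d) : 0 ≤ segDist ρ A B y := by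
  unfold segDist
  by_cases h : ∀ n, n ∉ A → y n = 0
  · rw [if_pos h]; exact segProb_nonneg hρ.1 A B y
  · rw [if_neg h]

lemma segDist_le_one {N d : ℕ} [NeZero d] {ρ : Matrix (Fin N → Fin d) (Fin N → Fin d) ℂ}
    (hρ : IsDensity ρ) {B : Fin N → Fin d → Fin d → ℂ} (hB : ∀ n, ONB (B n))
    (A : Finset (Fin N)) (y : Fin N → Fin d) : segDist ρ A B y ≤ 1 := by
  rw [← segDist_sum hρ hB A]
  exact Finset.single_le_sum (fun y' (_ : y' ∈ Finset.univ) => segDist_nonneg hρ A B y')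
    (Finset.mem_univ y)

end Glue
section Chain

variable {N d : ℕ} [NeZero d] {ρ : Matrix (Fin N → Fin d) (Fin N → Fin d) ℂ}
  {B : Fin N → Fin d → Fin d → ℂ}

lemma xlog_ite (P : Prop) [Decidable P] (x : ℝ) :
    (if P then x else 0) * Real.log (if P then x else 0)
    = if P then x * Real.log x else 0 := by
  by_cases h : P <;> simp [h]

lemma seg_subset_Q (m l : ℕ) : seg N m l ⊆ Qset N ((m + 1) * l) := by
  intro n hn
  rw [mem_seg] at hn
  rw [mem_Qset]
  have : (m + 1) * l = m * l + l := by ring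
  omega

lemma Q_subset_Q (m l : ℕ) : Qset N (m * l) ⊆ Qset N ((m + 1) * l) := by
  intro n hn
  rw [mem_Qset] at hn ⊢
  have : (m + 1) * l = m * l + l := by ring
  omega

lemma Q_sdiff_seg (m l : ℕ) : Qset N ((m + 1) * l) \ seg N m l = Qset N (m * l) := by
  ext n
  rw [Finset.mem_sdiff, mem_Qset, mem_Qset, mem_seg]
  have : (m + 1) * l = m * l + l := by ring
  omega

lemma Q_sdiff_Q (m l : ℕ) : Qset N ((m + 1) * l) \ Qset N (m * l) = seg N m l := by
  ext n
  rw [Finset.mem_sdiff, mem_Qset, mem_Qset, mem_seg]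
  have : (m + 1) * l = m * l + l := by ring
  omega

lemma chainA (hρ : IsDensity ρ) (hB : ∀ n, ONB (B n)) (m l : ℕ) :
    shannon (prefSegDist ρ m l (projPOVM B m l) B)
    = shannon (segDist ρ (Qset N ((m + 1) * l)) B) := by
  unfold shannon
  congr 1
  rw [Fintype.sum_prod_type]
  have e1 : ∀ (z : Fin (min (m * l) N) → Fin d) (y : Fin N → Fin d),
      prefSegDist ρ m l (projPOVM B m l) B (z, y) *
        Real.log (prefSegDist ρ m l (projPOVM B m l) B (z, y))
      = (if ∀ n, n ∉ seg N m l → y n = 0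
          then (fun c => segProb ρ (Qset N ((m + 1) * l)) B c *
            Real.log (segProb ρ (Qset N ((m + 1) * l)) B c)) (combZ m l z y) else 0) := by
    intro z y
    unfold prefSegDist
    rw [xlog_ite]
    by_cases h : ∀ n, n ∉ seg N m l → y n = 0
    · rw [if_pos h, if_pos h, prefSegProb_proj]
    · rw [if_neg h, if_neg h]
  rw [Finset.sum_congr rfl fun z _ => Finset.sum_congr rfl fun y _ => e1 z y]
  rw [sum_combZ m l (fun c => segProb ρ (Qset N ((m + 1) * l)) B c *
    Real.log (segProb ρ (Qset N ((m + 1) * l)) B c))]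
  refine Finset.sum_congr rfl fun c _ => ?_
  unfold segDist
  rw [xlog_ite]

lemma chainZ (hρ : IsDensity ρ) (hB : ∀ n, ONB (B n)) (m l : ℕ) :
    shannon (fun z => ∑ y, prefSegDist ρ m l (projPOVM B m l) B (z, y))
    = shannon (segDist ρ (Qset N (m * l)) B) := by
  have margZ : ∀ z, (∑ y, prefSegDist ρ m l (projPOVM B m l) B (z, y))
      = segProb ρ (Qset N (m * l)) B (extZ m l z) := by
    intro z
    have e1 : ∀ y, prefSegDist ρ m l (projPOVM B m l) B (z, y)
        = (if ∀ n, n ∉ seg N m l → y n = 0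
            then segProb ρ (Qset N ((m + 1) * l)) B
              (fun n => if n ∈ seg N m l then y n else extZ m l z n) else 0) := by
      intro y
      unfold prefSegDist
      by_cases h : ∀ n, n ∉ seg N m l → y n = 0
      · rw [if_pos h, if_pos h, prefSegProb_proj]
        congr 1
        funext n
        simp only [combZ, extZ]
        by_cases hseg : n ∈ seg N m l
        · have h1 : ¬ n.val < m * l := by
            have := mem_seg.mp hseg; omega
          rw [dif_neg h1, if_pos hseg, if_pos hseg]
        · rw [if_neg hseg, if_neg hseg]
      · rw [if_neg h, if_neg h]
    rw [Finset.sum_congr rfl fun y _ => e1 y]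
    have key := segProb_marg ρ hB (Qset N ((m + 1) * l)) (seg N m l)
      (seg_subset_Q m l) (extZ m l z)
    rw [Q_sdiff_seg] at key
    exact key
  rw [show (fun z => ∑ y, prefSegDist ρ m l (projPOVM B m l) B (z, y))
      = fun z => segProb ρ (Qset N (m * l)) B (extZ m l z) from funext margZ]
  unfold shannon
  congr 1
  have e2 := sum_extZ m l (fun c => segProb ρ (Qset N (m * l)) B c *
    Real.log (segProb ρ (Qset N (m * l)) B c))
  rw [e2]
  refine Finset.sum_congr rfl fun c _ => ?_
  unfold segDist
  rw [xlog_ite]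

lemma chainY (hρ : IsDensity ρ) (hB : ∀ n, ONB (B n)) (m l : ℕ) :
    (fun y => ∑ z, prefSegDist ρ m l (projPOVM B m l) B (z, y))
    = segDist ρ (seg N m l) B := by
  funext y
  unfold segDist prefSegDist
  by_cases h : ∀ n, n ∉ seg N m l → y n = 0
  · rw [if_pos h]
    rw [Finset.sum_congr rfl fun z _ => if_pos h]
    have e1 : ∀ z, prefSegProb ρ m l (projPOVM B m l) B z y
        = (fun c => segProb ρ (Qset N ((m + 1) * l)) B
            (fun n => if n ∈ Qset N (m * l) then c n else y n)) (extZ m l z) := by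
      intro z
      rw [prefSegProb_proj]
      dsimp only
      congr 1
      funext n
      simp only [combZ, extZ]
      by_cases h1 : n.val < m * l
      · rw [if_pos (mem_Qset.mpr h1), dif_pos h1, dif_pos h1]
      · rw [dif_neg h1, if_neg (fun hh => h1 (mem_Qset.mp hh))]
        by_cases hseg : n ∈ seg N m l
        · rw [if_pos hseg]
        · rw [if_neg hseg]
          exact (h n hseg).symm
    rw [Finset.sum_congr rfl fun z _ => e1 z]
    rw [sum_extZ m l (fun c => segProb ρ (Qset N ((m + 1) * l)) B
      (fun n => if n ∈ Qset N (m * l) then c n else y n))]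
    have key := segProb_marg ρ hB (Qset N ((m + 1) * l)) (Qset N (m * l))
      (Q_subset_Q m l) y
    rw [Q_sdiff_Q] at key
    exact key
  · rw [if_neg h]
    exact Finset.sum_eq_zero fun z _ => if_neg h

lemma prefSegDist_nonneg (hρ : IsDensity ρ) (m l : ℕ) {Z : Type} [Fintype Z]
    {E : Z → Matrix (Fin (min (m * l) N) → Fin d) (Fin (min (m * l) N) → Fin d) ℂ}
    (hE : IsPOVM E) (B : Fin N → Fin d → Fin d → ℂ) (zy : Z × (Fin N → Fin d)) :
    0 ≤ prefSegDist ρ m l E B zy := by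
  unfold prefSegDist
  by_cases h : ∀ n, n ∉ seg N m l → zy.2 n = 0
  · rw [if_pos h]
    exact prefSegProb_nonneg hρ.1 m l hE.1 B zy.1 zy.2
  · rw [if_neg h]

lemma prefSegDist_proj_sum (hρ : IsDensity ρ) (hB : ∀ n, ONB (B n)) (m l : ℕ) :
    ∑ zy : (Fin (min (m * l) N) → Fin d) × (Fin N → Fin d),
      prefSegDist ρ m l (projPOVM B m l) B zy = 1 := by
  rw [Fintype.sum_prod_type, Finset.sum_comm]
  have e1 : ∀ y : Fin N → Fin d, (∑ z, prefSegDist ρ m l (projPOVM B m l) B (z, y))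
      = segDist ρ (seg N m l) B y := fun y => congrFun (chainY hρ hB m l) y
  rw [Finset.sum_congr rfl fun y _ => e1 y]
  exact segDist_sum hρ hB _

lemma cond_eq (hρ : IsDensity ρ) (hB : ∀ n, ONB (B n)) (m l : ℕ) :
    condShannon (prefSegDist ρ m l (projPOVM B m l) B)
    = shannon (segDist ρ (Qset N ((m + 1) * l)) B)
      - shannon (segDist ρ (Qset N (m * l)) B) := by
  unfold condShannon
  rw [chainA hρ hB, chainZ hρ hB]

lemma step_le (hρ : IsDensity ρ) (hB : ∀ n, ONB (B n)) (m l : ℕ) :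
    shannon (segDist ρ (Qset N ((m + 1) * l)) B)
    ≤ shannon (segDist ρ (Qset N (m * l)) B) + shannon (segDist ρ (seg N m l) B) := by
  have h0 : ∀ zy, 0 ≤ prefSegDist ρ m l (projPOVM B m l) B zy :=
    prefSegDist_nonneg hρ m l (projPOVM_isPOVM hB m l) B
  have hsub := shannon_subadd h0 (prefSegDist_proj_sum hρ hB m l)
  rw [chainA hρ hB m l, chainZ hρ hB m l, chainY hρ hB m l] at hsub
  exact hsub

lemma hfun_zero (hρ : IsDensity ρ) (B : Fin N → Fin d → Fin d → ℂ) :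
    shannon (segDist ρ (Qset N 0) B) = 0 := by
  have hQ : Qset N 0 = ∅ := by
    ext n; simp [mem_Qset]
  rw [hQ]
  unfold shannon
  rw [neg_eq_zero]
  refine Finset.sum_eq_zero fun y _ => ?_
  unfold segDist
  by_cases h : ∀ n, n ∉ (∅ : Finset (Fin N)) → y n = 0
  · rw [if_pos h, segProb_empty hρ]
    simp
  · rw [if_neg h]
    simp

lemma Qset_all : Qset N N = Finset.univ := by
  ext n; simp [mem_Qset, n.isLt]

lemma chain_total (hρ : IsDensity ρ) (hB : ∀ n, ONB (B n)) (l M : ℕ) (hM : M * l = N) :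
    ∑ m ∈ Finset.range M, condShannon (prefSegDist ρ m l (projPOVM B m l) B)
    = shannon (locProb ρ B) := by
  rw [Finset.sum_congr rfl fun m _ => cond_eq hρ hB m l]
  rw [Finset.sum_range_sub (fun k => shannon (segDist ρ (Qset N (k * l)) B)) M]
  rw [show (0 : ℕ) * l = 0 from zero_mul l, hfun_zero hρ B, sub_zero, hM, Qset_all,
    segDist_univ]

end Chain
/-- The work deficit density `δ = Δ/N` is sandwiched between the efficiently computable
bounds: `L_l ≤ δ ≤ U_l` for every segment length `l` dividing `N`. -/
theorem Lbound_le_deficitDensity_le_Ubound {N d : ℕ} [NeZero d]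
    (ρ : Matrix (Fin N → Fin d) (Fin N → Fin d) ℂ) (hρ : IsDensity ρ)
    (l : ℕ) (hl : 0 < l) (hdvd : l ∣ N) :
    Lbound ρ l ≤ deficit ρ / N ∧ deficit ρ / N ≤ Ubound ρ l := by
  classical
  rcases Nat.eq_zero_or_pos N with hN | hN
  · subst hN
    constructor <;> simp [Lbound, Ubound, div_zero]
  set M := N / l with hMdef
  have hMl : M * l = N := Nat.div_mul_cancel hdvd
  have hM0 : 0 < M := Nat.div_pos (Nat.le_of_dvd hN hdvd) hl
  -- the identity basis
  set B₀ : Fin N → Fin d → Fin d → ℂ := fun _ a i => if a = i then 1 else 0 with hB₀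
  have hB₀onb : ∀ n, ONB (B₀ n) := by
    intro n a b
    have hterm : ∀ i, (starRingEnd ℂ) (if a = i then (1:ℂ) else 0) * (if b = i then 1 else 0)
        = if a = i then (if b = i then (1:ℂ) else 0) else 0 := by
      intro i
      by_cases h1 : a = i <;> by_cases h2 : b = i <;> simp [h1, h2]
    show (∑ i, (starRingEnd ℂ) (if a = i then (1:ℂ) else 0) * (if b = i then 1 else 0))
      = if a = b then 1 else 0
    rw [Finset.sum_congr rfl fun i _ => hterm i,
      Finset.sum_ite_eq Finset.univ a (fun i => if b = i then (1:ℂ) else 0)]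
    simp only [Finset.mem_univ, if_true]
    by_cases h : a = b
    · simp [h]
    · rw [if_neg (fun hh => h hh.symm), if_neg h]
  -- the global set S
  have hSbd : ∀ b ∈ {h : ℝ | ∃ B : Fin N → Fin d → Fin d → ℂ,
      (∀ n, ONB (B n)) ∧ h = shannon (locProb ρ B)}, 0 ≤ b := by
    rintro b ⟨B, hB, rfl⟩
    exact shannon_nonneg (locProb_nonneg hρ B) (locProb_le_one hρ hB)
  have hSne : Set.Nonempty {h : ℝ | ∃ B : Fin N → Fin d → Fin d → ℂ,
      (∀ n, ONB (B n)) ∧ h = shannon (locProb ρ B)} := ⟨_, B₀, hB₀onb, rfl⟩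
  have hSbdd : BddBelow {h : ℝ | ∃ B : Fin N → Fin d → Fin d → ℂ,
      (∀ n, ONB (B n)) ∧ h = shannon (locProb ρ B)} := ⟨0, hSbd⟩
  -- upper bound
  have key2 : sInf {h : ℝ | ∃ B : Fin N → Fin d → Fin d → ℂ,
        (∀ n, ONB (B n)) ∧ h = shannon (locProb ρ B)}
      ≤ ∑ m ∈ Finset.range M, sInf {h : ℝ | ∃ B : Fin N → Fin d → Fin d → ℂ,
        (∀ n, ONB (B n)) ∧ h = shannon (segDist ρ (seg N m l) B)} := by
    have hUne : ∀ m : ℕ, Set.Nonempty {h : ℝ | ∃ B : Fin N → Fin d → Fin d → ℂ,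
        (∀ n, ONB (B n)) ∧ h = shannon (segDist ρ (seg N m l) B)} :=
      fun m => ⟨_, B₀, hB₀onb, rfl⟩
    refine le_of_forall_pos_le_add fun ε hε => ?_
    have hMR : (0:ℝ) < (M : ℝ) := Nat.cast_pos.2 hM0
    have hchoice : ∀ m : ℕ, ∃ B : Fin N → Fin d → Fin d → ℂ, (∀ n, ONB (B n)) ∧
        shannon (segDist ρ (seg N m l) B) < sInf {h : ℝ | ∃ B : Fin N → Fin d → Fin d → ℂ,
          (∀ n, ONB (B n)) ∧ h = shannon (segDist ρ (seg N m l) B)} + ε / M := by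
      intro m
      obtain ⟨b, hb, hlt⟩ := Real.lt_sInf_add_pos (hUne m) (div_pos hε hMR)
      obtain ⟨B, hB, rfl⟩ := hb
      exact ⟨B, hB, hlt⟩
    choose Bm hBm hBmlt using hchoice
    set Bc : Fin N → Fin d → Fin d → ℂ := fun n => Bm (n.val / l) n with hBc
    have hBconb : ∀ n, ONB (Bc n) := fun n => hBm (n.val / l) n
    have hseg_eq : ∀ m : ℕ, segDist ρ (seg N m l) Bc = segDist ρ (seg N m l) (Bm m) := by
      intro m
      funext y
      unfold segDist
      by_cases h : ∀ n, n ∉ seg N m l → y n = 0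
      · rw [if_pos h, if_pos h]
        refine segProb_congr ρ _ (fun n hn => ?_) (fun n _ => rfl)
        have hmem := mem_seg.mp hn
        have h5 : n.val / l = m := Nat.div_eq_of_lt_le hmem.1
          (by rw [Nat.succ_mul]; omega)
        rw [hBc]
        dsimp only
        rw [h5]
      · rw [if_neg h, if_neg h]
    have h1 : sInf {h : ℝ | ∃ B : Fin N → Fin d → Fin d → ℂ,
        (∀ n, ONB (B n)) ∧ h = shannon (locProb ρ B)} ≤ shannon (locProb ρ Bc) :=
      csInf_le hSbdd ⟨Bc, hBconb, rfl⟩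
    have h2 : shannon (locProb ρ Bc) = ∑ m ∈ Finset.range M,
        (shannon (segDist ρ (Qset N ((m + 1) * l)) Bc)
          - shannon (segDist ρ (Qset N (m * l)) Bc)) := by
      rw [Finset.sum_range_sub (fun k => shannon (segDist ρ (Qset N (k * l)) Bc)) M]
      rw [show (0 : ℕ) * l = 0 from zero_mul l, hfun_zero hρ Bc, sub_zero, hMl, Qset_all,
        segDist_univ]
    have h3 : ∀ m ∈ Finset.range M,
        shannon (segDist ρ (Qset N ((m + 1) * l)) Bc)
          - shannon (segDist ρ (Qset N (m * l)) Bc)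
        ≤ sInf {h : ℝ | ∃ B : Fin N → Fin d → Fin d → ℂ,
            (∀ n, ONB (B n)) ∧ h = shannon (segDist ρ (seg N m l) B)} + ε / M := by
      intro m _
      have hst := step_le hρ hBconb m l
      have h4 : shannon (segDist ρ (seg N m l) Bc) < sInf {h : ℝ | ∃ B : Fin N → Fin d → Fin d → ℂ,
          (∀ n, ONB (B n)) ∧ h = shannon (segDist ρ (seg N m l) B)} + ε / M := by
        rw [hseg_eq m]
        exact hBmlt m
      linarith
    calc sInf {h : ℝ | ∃ B : Fin N → Fin d → Fin d → ℂ,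
          (∀ n, ONB (B n)) ∧ h = shannon (locProb ρ B)}
        ≤ shannon (locProb ρ Bc) := h1
      _ = ∑ m ∈ Finset.range M, (shannon (segDist ρ (Qset N ((m + 1) * l)) Bc)
          - shannon (segDist ρ (Qset N (m * l)) Bc)) := h2
      _ ≤ ∑ m ∈ Finset.range M, (sInf {h : ℝ | ∃ B : Fin N → Fin d → Fin d → ℂ,
          (∀ n, ONB (B n)) ∧ h = shannon (segDist ρ (seg N m l) B)} + ε / M) :=
        Finset.sum_le_sum h3
      _ = (∑ m ∈ Finset.range M, sInf {h : ℝ | ∃ B : Fin N → Fin d → Fin d → ℂ,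
          (∀ n, ONB (B n)) ∧ h = shannon (segDist ρ (seg N m l) B)}) + ε := by
        rw [Finset.sum_add_distrib, Finset.sum_const, Finset.card_range, nsmul_eq_mul,
          mul_div_cancel₀ ε (ne_of_gt hMR)]
  -- lower bound
  have key1 : (∑ m ∈ Finset.range M, sInf {h : ℝ | ∃ (Z : Type) (_ : Fintype Z)
        (E : Z → Matrix (Fin (min (m * l) N) → Fin d) (Fin (min (m * l) N) → Fin d) ℂ)
        (B : Fin N → Fin d → Fin d → ℂ),
        IsPOVM E ∧ (∀ n, ONB (B n)) ∧ h = condShannon (prefSegDist ρ m l E B)})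
      ≤ sInf {h : ℝ | ∃ B : Fin N → Fin d → Fin d → ℂ,
        (∀ n, ONB (B n)) ∧ h = shannon (locProb ρ B)} := by
    refine le_csInf hSne ?_
    rintro b ⟨B, hB, rfl⟩
    have h1 : ∀ m ∈ Finset.range M, sInf {h : ℝ | ∃ (Z : Type) (_ : Fintype Z)
        (E : Z → Matrix (Fin (min (m * l) N) → Fin d) (Fin (min (m * l) N) → Fin d) ℂ)
        (B : Fin N → Fin d → Fin d → ℂ),
        IsPOVM E ∧ (∀ n, ONB (B n)) ∧ h = condShannon (prefSegDist ρ m l E B)}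
        ≤ condShannon (prefSegDist ρ m l (projPOVM B m l) B) := by
      intro m _
      refine csInf_le ⟨0, ?_⟩ ?_
      · rintro t ht
        obtain ⟨Z, instZ, E, B', hE, hB', rfl⟩ := ht
        unfold condShannon
        have hmarg := shannon_marginal_le (p := prefSegDist ρ m l E B')
          (prefSegDist_nonneg hρ m l hE B')
        linarith
      · exact ⟨_, inferInstance, projPOVM B m l, B, projPOVM_isPOVM hB m l, hB, rfl⟩
    calc (∑ m ∈ Finset.range M, sInf {h : ℝ | ∃ (Z : Type) (_ : Fintype Z)
          (E : Z → Matrix (Fin (min (m * l) N) → Fin d) (Fin (min (m * l) N) → Fin d) ℂ)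
          (B : Fin N → Fin d → Fin d → ℂ),
          IsPOVM E ∧ (∀ n, ONB (B n)) ∧ h = condShannon (prefSegDist ρ m l E B)})
        ≤ ∑ m ∈ Finset.range M, condShannon (prefSegDist ρ m l (projPOVM B m l) B) :=
        Finset.sum_le_sum h1
      _ = shannon (locProb ρ B) := chain_total hρ hB l M hMl
  -- assemble
  have hNR : (0:ℝ) < (N : ℝ) := Nat.cast_pos.2 hN
  have hdivN : ∀ x : ℝ, x / (N : ℝ) = (1 / (N : ℝ)) * x := fun x => by ring
  have hpos : (0:ℝ) ≤ 1 / (N : ℝ) := by positivity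
  constructor
  · rw [show deficit ρ / (N:ℝ) = (1/(N:ℝ)) * (deficit ρ) from by ring]
    unfold Lbound deficit
    exact mul_le_mul_of_nonneg_left (sub_le_sub_right key1 _) hpos
  · rw [show deficit ρ / (N:ℝ) = (1/(N:ℝ)) * (deficit ρ) from by ring]
    unfold Ubound deficit
    exact mul_le_mul_of_nonneg_left (sub_le_sub_right key2 _) hpos
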